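/- Let z ↦ F(z) = N - K(M + zI)⁻¹K* be defined for z in the upper half-plane, where M is dissipative, N is dissipative and invertible, and K is arbitrary. Then F is an operator-valued Herglotz function (Im F(z) ≥ 0) and F(z) is boundedly invertible for every z in the open upper half-plane. -/

import Mathlib

open Complex

variable {H : Type*} [NormedAddCommGroup H] [InnerProductSpace ℂ H] [CompleteSpace H]

/-- `M` is dissipative: `Im ⟪x, M x⟫ ≥ 0` for all `x`. -/
def IsDissipative (M : H →L[ℂ] H) : Prop := ∀ x : H, 0 ≤ (inner ℂ x (M x) : ℂ).im


/-- imaginary part via adjoint -/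
lemma im_inner_adjoint (A : H →L[ℂ] H) (x : H) :
    (inner ℂ x ((ContinuousLinearMap.adjoint A) x) : ℂ).im = -(inner ℂ x (A x) : ℂ).im := by
  rw [ContinuousLinearMap.adjoint_inner_right, ← inner_conj_symm, Complex.conj_im]

/-- coercive imaginary part gives lower norm bound -/
lemma norm_lower_of_im (T : H →L[ℂ] H) {c : ℝ}
    (h : ∀ x, c * ‖x‖ ^ 2 ≤ (inner ℂ x (T x) : ℂ).im) (x : H) : c * ‖x‖ ≤ ‖T x‖ := by
  rcases eq_or_ne x 0 with rfl | hx
  · simp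
  · have h1 := h x
    have h2 : (inner ℂ x (T x) : ℂ).im ≤ ‖x‖ * ‖T x‖ := by
      calc (inner ℂ x (T x) : ℂ).im ≤ ‖(inner ℂ x (T x) : ℂ)‖ := by
            simpa using (le_abs_self _).trans (Complex.abs_im_le_norm (inner ℂ x (T x) : ℂ))
        _ ≤ ‖x‖ * ‖T x‖ := norm_inner_le_norm x (T x)
    have hxp : (0:ℝ) < ‖x‖ := norm_pos_iff.mpr hx
    nlinarith

lemma isUnit_of_bddBelow (G : H →L[ℂ] H) {c c' : ℝ} (hc : 0 < c) (hc' : 0 < c')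
    (h1 : ∀ x, c * ‖x‖ ≤ ‖G x‖)
    (h2 : ∀ x, c' * ‖x‖ ≤ ‖(ContinuousLinearMap.adjoint G) x‖) :
    IsUnit G := by
  have hbd : ∀ x, ‖x‖ ≤ (Real.toNNReal c⁻¹ : ℝ) * ‖G x‖ := by
    intro x
    rw [Real.coe_toNNReal _ (by positivity)]
    rw [inv_mul_eq_div, le_div_iff₀ hc] at *
    linarith [h1 x]
  have hanti : AntilipschitzWith (Real.toNNReal c⁻¹) G :=
    ContinuousLinearMap.antilipschitz_of_bound G hbd
  have hclosed : IsClosed (Set.range G) := hanti.isClosed_range G.uniformContinuous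
  have hker : LinearMap.ker (G : H →ₗ[ℂ] H) = ⊥ := by
    rw [Submodule.eq_bot_iff]
    intro x hx
    have hx0 : G x = 0 := hx
    have := h1 x
    rw [hx0, norm_zero] at this
    have h0 : ‖x‖ ≤ 0 := by nlinarith
    simpa [norm_le_zero_iff] using h0
  have hrange : LinearMap.range (G : H →ₗ[ℂ] H) = ⊤ := by
    have hcr : IsClosed ((LinearMap.range (G : H →ₗ[ℂ] H) : Submodule ℂ H) : Set H) := by
      rwa [LinearMap.coe_range]
    haveI : CompleteSpace (LinearMap.range (G : H →ₗ[ℂ] H)) := hcr.completeSpace_coe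
    rw [← Submodule.orthogonal_eq_bot_iff]
    rw [Submodule.eq_bot_iff]
    intro x hx
    have hGx : (ContinuousLinearMap.adjoint G) x = 0 := by
      have h3 := hx (G ((ContinuousLinearMap.adjoint G) x))
        (LinearMap.mem_range_self _ _)
      have h4 : inner ℂ x (G ((ContinuousLinearMap.adjoint G) x)) = (0:ℂ) := by
        rw [← inner_conj_symm, h3, map_zero]
      have h5 : inner ℂ ((ContinuousLinearMap.adjoint G) x)
          ((ContinuousLinearMap.adjoint G) x) = (0:ℂ) := by
        rw [ContinuousLinearMap.adjoint_inner_left]; exact h4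
      exact inner_self_eq_zero.mp h5
    have := h2 x
    rw [hGx, norm_zero] at this
    have : ‖x‖ ≤ 0 := by nlinarith
    simpa [norm_le_zero_iff] using this
  let e := ContinuousLinearEquiv.ofBijective G hker hrange
  refine ⟨⟨G, e.symm.toContinuousLinearMap, ?_, ?_⟩, rfl⟩
  · ext x
    simp [e, ContinuousLinearMap.mul_apply]
  · ext x
    simp [e, ContinuousLinearMap.mul_apply]

lemma im_core (Nn K A B : H →L[ℂ] H) (hAB : A * B = 1) (x : H) :
    (inner ℂ x ((Nn - K * B * star K) x) : ℂ).im
      = (inner ℂ x (Nn x) : ℂ).im + (inner ℂ (B (star K x)) (A (B (star K x))) : ℂ).im := by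
  set y := B (star K x) with hy
  have hAy : A y = star K x := by
    have : (A * B) (star K x) = (1 : H →L[ℂ] H) (star K x) := by rw [hAB]
    simpa [ContinuousLinearMap.mul_apply] using this
  have happ : (Nn - K * B * star K) x = Nn x - K y := by
    simp [ContinuousLinearMap.sub_apply, ContinuousLinearMap.mul_apply, hy]
  rw [happ, inner_sub_right]
  have hKy : (inner ℂ x (K y) : ℂ) = starRingEnd ℂ (inner ℂ y (A y)) := by
    rw [hAy]
    rw [ContinuousLinearMap.star_eq_adjoint, ← ContinuousLinearMap.adjoint_inner_left]
    rw [← inner_conj_symm]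
  rw [hKy]
  simp only [Complex.sub_im, Complex.conj_im]
  ring

set_option maxHeartbeats 1000000 in
lemma lower_bound (Nn Nn' K A B : H →L[ℂ] H) (hAB : A * B = 1)
    (hNN' : Nn' * Nn = 1) {t : ℝ} (ht : 0 < t)
    (hA : ∀ u, t * ‖u‖ ^ 2 ≤ (inner ℂ u (A u) : ℂ).im)
    (hNd : ∀ u, 0 ≤ (inner ℂ u (Nn u) : ℂ).im) :
    ∃ c > 0, ∀ x, c * ‖x‖ ≤ ‖(Nn - K * B * star K) x‖ := by
  set C₁ : ℝ := ‖Nn'‖ with hC₁def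
  set D : ℝ := ‖Nn'‖ * ‖K‖ with hDdef
  have hC₁ : 0 ≤ C₁ := norm_nonneg _
  have hD : 0 ≤ D := mul_nonneg (norm_nonneg _) (norm_nonneg _)
  set c1 : ℝ := 1 / (2 * (C₁ + 1)) with hc1def
  set c2 : ℝ := t / (4 * (D + 1) ^ 2) with hc2def
  have hc1 : 0 < c1 := by positivity
  have hc2 : 0 < c2 := by positivity
  refine ⟨min c1 c2, lt_min hc1 hc2, fun x => ?_⟩
  set G := Nn - K * B * star K with hGdef
  set y := B (star K x) with hy
  set a := ‖G x‖ with ha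
  set s := ‖x‖ with hs
  have has : 0 ≤ a := norm_nonneg _
  have hss : 0 ≤ s := norm_nonneg _
  have hys : 0 ≤ ‖y‖ := norm_nonneg _
  have him := im_core Nn K A B hAB x
  have h1 : t * ‖y‖ ^ 2 ≤ (inner ℂ x (G x) : ℂ).im := by
    rw [hGdef, him]
    have := hNd x
    have := hA y
    rw [← hy]
    linarith
  have h2 : (inner ℂ x (G x) : ℂ).im ≤ s * a := by
    calc (inner ℂ x (G x) : ℂ).im ≤ ‖(inner ℂ x (G x) : ℂ)‖ := by
          simpa using
            (le_abs_self _).trans (Complex.abs_im_le_norm (inner ℂ x (G x) : ℂ))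
      _ ≤ s * a := norm_inner_le_norm x (G x)
  have hf1 : t * ‖y‖ ^ 2 ≤ s * a := h1.trans h2
  have hx' : Nn' (Nn x) = x := by
    have : (Nn' * Nn) x = (1 : H →L[ℂ] H) x := by rw [hNN']
    simpa [ContinuousLinearMap.mul_apply] using this
  have h3 : s ≤ C₁ * ‖Nn x‖ := by
    conv_lhs => rw [hs, ← hx']
    exact (Nn'.le_opNorm _)
  have h4 : Nn x = G x + K y := by
    simp [hGdef, ContinuousLinearMap.sub_apply, ContinuousLinearMap.mul_apply, hy]
  have h5 : ‖Nn x‖ ≤ a + ‖K‖ * ‖y‖ := by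
    rw [h4]
    exact (norm_add_le _ _).trans (add_le_add le_rfl (K.le_opNorm _))
  have hf2 : s ≤ C₁ * a + D * ‖y‖ := by
    have := mul_le_mul_of_nonneg_left h5 hC₁
    rw [hDdef]
    nlinarith
  -- arithmetic
  rcases le_or_gt s (2 * (C₁ + 1) * a) with hcase | hcase
  · have e1 : c1 * (2 * (C₁ + 1)) = 1 := by
      rw [hc1def]; field_simp
    calc min c1 c2 * s ≤ c1 * s :=
          mul_le_mul_of_nonneg_right (min_le_left _ _) hss
      _ ≤ a := by nlinarith [mul_le_mul_of_nonneg_left hcase hc1.le]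
  · have hy2 : s ≤ 2 * (D + 1) * ‖y‖ := by nlinarith
    have e2 : c2 * (4 * (D + 1) ^ 2) = t := by
      rw [hc2def]; field_simp
    rcases eq_or_lt_of_le hss with h0 | h0
    · rw [← h0]
      simpa using has
    · have hsq : s ^ 2 ≤ 4 * (D + 1) ^ 2 * ‖y‖ ^ 2 := by nlinarith
      have h6 : c2 * s ^ 2 ≤ t * ‖y‖ ^ 2 := by
        calc c2 * s ^ 2 ≤ c2 * (4 * (D + 1) ^ 2 * ‖y‖ ^ 2) :=
              mul_le_mul_of_nonneg_left hsq hc2.le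
          _ = c2 * (4 * (D + 1) ^ 2) * ‖y‖ ^ 2 := by ring
          _ = t * ‖y‖ ^ 2 := by rw [e2]
      have h8 := h6.trans hf1
      have key : c2 * s ≤ a := le_of_mul_le_mul_right (by linarith [h8]) h0
      calc min c1 c2 * s ≤ c2 * s :=
            mul_le_mul_of_nonneg_right (min_le_right _ _) hss
        _ ≤ a := key

lemma im_inner_neg_star (A : H →L[ℂ] H) (x : H) :
    (inner ℂ x ((-(star A)) x) : ℂ).im = (inner ℂ x (A x) : ℂ).im := by
  rw [ContinuousLinearMap.neg_apply, inner_neg_right, ContinuousLinearMap.star_eq_adjoint,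
    Complex.neg_im, im_inner_adjoint, neg_neg]

lemma im_inner_shift (M : H →L[ℂ] H) (hM : IsDissipative M) (z : ℂ) (u : H) :
    z.im * ‖u‖ ^ 2 ≤ (inner ℂ u ((M + z • 1) u) : ℂ).im := by
  have happ : (M + z • (1 : H →L[ℂ] H)) u = M u + z • u := by
    simp [ContinuousLinearMap.add_apply]
  rw [happ, inner_add_right, inner_smul_right]
  have h1 : (z * (inner ℂ u u : ℂ)).im = z.im * ‖u‖ ^ 2 := by
    rw [Complex.mul_im]
    have hre : (inner ℂ u u : ℂ).re = ‖u‖ ^ 2 := by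
      simpa using inner_self_eq_norm_sq (𝕜 := ℂ) u
    have him0 : (inner ℂ u u : ℂ).im = 0 := by
      exact inner_self_im (𝕜 := ℂ) u
    rw [hre, him0]
    ring
  rw [Complex.add_im, h1]
  have := hM u
  linarith

/-- Let `F(z) = N - K (M + zI)⁻¹ K*` with `M` dissipative, `N` dissipative invertible,
`K` arbitrary.  Then `F` is an operator-valued Herglotz function: it is analytic on the
open upper half-plane, `Im F(z) ≥ 0` (i.e. `F(z)` is dissipative), and `F(z)` is
boundedly invertible for every `z` in the open upper half-plane. -/
theorem herglotz_invertible (M N K : H →L[ℂ] H)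
    (hM : IsDissipative M) (hN : IsDissipative N) (hNinv : IsUnit N) :
    DifferentiableOn ℂ (fun z : ℂ => N - K * Ring.inverse (M + z • 1) * star K)
      {z : ℂ | 0 < z.im} ∧
    ∀ z : ℂ, 0 < z.im →
      IsDissipative (N - K * Ring.inverse (M + z • 1) * star K) ∧
      IsUnit (N - K * Ring.inverse (M + z • 1) * star K) := by
  have hAcoer : ∀ z : ℂ, ∀ u : H,
      z.im * ‖u‖ ^ 2 ≤ (inner ℂ u ((M + z • (1 : H →L[ℂ] H)) u) : ℂ).im :=
    fun z u => im_inner_shift M hM z u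
  have hAunit : ∀ z : ℂ, 0 < z.im → IsUnit (M + z • (1 : H →L[ℂ] H)) := by
    intro z hz
    set A := M + z • (1 : H →L[ℂ] H) with hAdef
    have h1 : ∀ x, z.im * ‖x‖ ≤ ‖A x‖ := norm_lower_of_im A (hAcoer z)
    have h2 : ∀ x, z.im * ‖x‖ ≤ ‖(ContinuousLinearMap.adjoint A) x‖ := by
      intro x
      have hcoer : ∀ u, z.im * ‖u‖ ^ 2 ≤ (inner ℂ u ((-(star A)) u) : ℂ).im := by
        intro u
        rw [im_inner_neg_star]
        exact hAcoer z u
      have := norm_lower_of_im (-(star A)) hcoer x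
      simpa [ContinuousLinearMap.star_eq_adjoint] using this
    exact isUnit_of_bddBelow A hz hz h1 h2
  constructor
  · intro z hz
    apply DifferentiableAt.differentiableWithinAt
    apply DifferentiableAt.sub (differentiableAt_const N)
    apply DifferentiableAt.mul_const
    apply DifferentiableAt.mul (differentiableAt_const K)
    exact DifferentiableAt.inverse
      ((differentiableAt_const M).add (differentiableAt_id.smul_const 1)) (hAunit z hz)
  · intro z hz
    set A := M + z • (1 : H →L[ℂ] H) with hAdef
    have hu := hAunit z hz
    set B := Ring.inverse A with hBdef
    have hAB : A * B = 1 := Ring.mul_inverse_cancel A hu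
    have hBA : B * A = 1 := Ring.inverse_mul_cancel A hu
    have hA : ∀ u, z.im * ‖u‖ ^ 2 ≤ (inner ℂ u (A u) : ℂ).im := hAcoer z
    constructor
    · intro x
      rw [im_core N K A B hAB x]
      have h1 := hN x
      have h2 := hA (B (star K x))
      nlinarith [norm_nonneg (B (star K x)), sq_nonneg ‖B (star K x)‖]
    · obtain ⟨u, huN⟩ := hNinv
      have hNN' : (↑u⁻¹ : H →L[ℂ] H) * N = 1 := by
        rw [← huN, ← Units.val_mul]
        simp
      have hN'N : N * (↑u⁻¹ : H →L[ℂ] H) = 1 := by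
        rw [← huN, ← Units.val_mul]
        simp
      obtain ⟨c, hc, hlow⟩ := lower_bound N (↑u⁻¹) K A B hAB hNN' hz hA hN
      have hABs : (-(star A)) * (-(star B)) = 1 := by
        rw [neg_mul_neg, ← star_mul, hBA, star_one]
      have hNN's : (-(star (↑u⁻¹ : H →L[ℂ] H))) * (-(star N)) = 1 := by
        rw [neg_mul_neg, ← star_mul, hN'N, star_one]
      have hAs : ∀ v, z.im * ‖v‖ ^ 2 ≤ (inner ℂ v ((-(star A)) v) : ℂ).im := by
        intro v
        rw [im_inner_neg_star]
        exact hA v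
      have hNds : ∀ v, 0 ≤ (inner ℂ v ((-(star N)) v) : ℂ).im := by
        intro v
        rw [im_inner_neg_star]
        exact hN v
      obtain ⟨c', hc', hlow'⟩ :=
        lower_bound (-(star N)) (-(star (↑u⁻¹ : H →L[ℂ] H))) K (-(star A)) (-(star B))
          hABs hNN's hz hAs hNds
      have hid : (-(star N)) - K * (-(star B)) * star K
          = -(star (N - K * B * star K)) := by
        rw [star_sub, star_mul, star_mul, star_star]
        simp only [mul_neg, neg_mul, sub_neg_eq_add, neg_sub]
        abel
      refine isUnit_of_bddBelow _ hc hc' hlow ?_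
      intro x
      have hx := hlow' x
      rw [hid] at hx
      have hnorm : ‖(-(star (N - K * B * star K))) x‖
          = ‖(star (N - K * B * star K)) x‖ := by
        rw [ContinuousLinearMap.neg_apply, norm_neg]
      rw [hnorm, ContinuousLinearMap.star_eq_adjoint] at hx
      exact hx
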